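/- arXiv:2112.04085 — 2 statements merged into one kernel-verified Lean document; each statement's English description precedes it below -/
import Mathlib

section
/- Let N, Q, R be real n×n matrices and ε > 0. Then the matrix A = (N Nᵀ + ε I)⁻¹ · (−Q Qᵀ − ε I + (1/2)(R − Rᵀ)) is Hurwitz, i.e., every eigenvalue λ ∈ ℂ of A satisfies Re(λ) < 0. -/
open Matrix Complex ComplexOrder

section aux

variable {n : ℕ}

private lemma phw_conjT_map (M : Matrix (Fin n) (Fin n) ℝ) :
    (M.map Complex.ofReal)ᴴ = Mᵀ.map Complex.ofReal := by
  ext i j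
  simp [conjTranspose_apply, Complex.conj_ofReal]

private lemma phw_posdef (B : Matrix (Fin n) (Fin n) ℝ) (ε : ℝ) (hε : 0 < ε) :
    ((B * Bᵀ + ε • (1 : Matrix (Fin n) (Fin n) ℝ)).map Complex.ofReal).PosDef := by
  have hmap : (B * Bᵀ + ε • (1 : Matrix (Fin n) (Fin n) ℝ)).map Complex.ofReal
      = (B.map Complex.ofReal) * (B.map Complex.ofReal)ᴴ
        + (ε : ℂ) • (1 : Matrix (Fin n) (Fin n) ℂ) := by
    rw [phw_conjT_map]
    ext i j
    simp [Matrix.mul_apply, Matrix.one_apply, apply_ite (Complex.ofReal)]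
  rw [hmap, smul_one_eq_diagonal]
  exact Matrix.PosDef.posSemidef_add
    (posSemidef_self_mul_conjTranspose (B.map Complex.ofReal))
    (.diagonal fun _ => by exact_mod_cast hε)

end aux

/-- the parameterization A = (NNᵀ + εI)⁻¹(−QQᵀ − εI + ½(R − Rᵀ)) yields a
Hurwitz matrix: every complex eigenvalue has negative real part. -/
theorem param_matrix_hurwitz {n : ℕ} (N Q R : Matrix (Fin n) (Fin n) ℝ) (ε : ℝ) (hε : 0 < ε)
    (A : Matrix (Fin n) (Fin n) ℝ)
    (hA : A = (N * Nᵀ + ε • (1 : Matrix (Fin n) (Fin n) ℝ))⁻¹ *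
      (-(Q * Qᵀ) - ε • (1 : Matrix (Fin n) (Fin n) ℝ) + (1/2 : ℝ) • (R - Rᵀ))) :
    ∀ μ ∈ spectrum ℂ (A.map (Complex.ofReal)), μ.re < 0 := by
  classical
  intro μ hμ
  set P : Matrix (Fin n) (Fin n) ℝ := N * Nᵀ + ε • 1 with hPdef
  set G : Matrix (Fin n) (Fin n) ℝ := Q * Qᵀ + ε • 1 with hGdef
  set K : Matrix (Fin n) (Fin n) ℝ := (1/2 : ℝ) • (R - Rᵀ) with hKdef
  set M : Matrix (Fin n) (Fin n) ℝ := -(Q * Qᵀ) - ε • 1 + (1/2 : ℝ) • (R - Rᵀ) with hMdef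
  have hMeq : M = -G + K := by rw [hMdef, hGdef, hKdef]; abel
  -- real positive definiteness of P
  have hPc : (P.map Complex.ofReal).PosDef := phw_posdef N ε hε
  have hGc : (G.map Complex.ofReal).PosDef := phw_posdef Q ε hε
  have hP : P.PosDef := by
    rw [hPdef]
    have h1 : N * Nᵀ = N * Nᴴ := by rw [conjTranspose_eq_transpose_of_trivial]
    rw [h1, smul_one_eq_diagonal]
    exact Matrix.PosDef.posSemidef_add (posSemidef_self_mul_conjTranspose N)
      (.diagonal fun _ => hε)
  -- P * A = M
  have hPA : P * A = M := by
    rw [hA, ← mul_assoc, mul_nonsing_inv _ hP.det_pos.ne'.isUnit, one_mul]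
  have hPAc : (P.map Complex.ofReal) * (A.map Complex.ofReal) = M.map Complex.ofReal := by
    rw [← hPA]
    exact (Matrix.map_mul (f := Complex.ofRealHom)).symm
  -- eigenvector
  rw [spectrum.mem_iff] at hμ
  have hdet : (algebraMap ℂ (Matrix (Fin n) (Fin n) ℂ) μ - A.map Complex.ofReal).det = 0 := by
    by_contra h
    exact hμ ((Matrix.isUnit_iff_isUnit_det _).mpr (Ne.isUnit h))
  obtain ⟨v, hv0, hv⟩ := (Matrix.exists_mulVec_eq_zero_iff).mpr hdet
  have heig : (A.map Complex.ofReal) *ᵥ v = μ • v := by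
    rw [sub_mulVec, Algebra.algebraMap_eq_smul_one, smul_mulVec, one_mulVec,
      sub_eq_zero] at hv
    exact hv.symm
  have key : (M.map Complex.ofReal) *ᵥ v = μ • ((P.map Complex.ofReal) *ᵥ v) := by
    rw [← hPAc, ← mulVec_mulVec, heig, mulVec_smul]
  have keyd : star v ⬝ᵥ ((M.map Complex.ofReal) *ᵥ v)
      = μ * (star v ⬝ᵥ ((P.map Complex.ofReal) *ᵥ v)) := by
    rw [key, dotProduct_smul, smul_eq_mul]
  -- quadratic forms
  set p : ℂ := star v ⬝ᵥ ((P.map Complex.ofReal) *ᵥ v) with hpdef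
  set g : ℂ := star v ⬝ᵥ ((G.map Complex.ofReal) *ᵥ v) with hgdef
  set k : ℂ := star v ⬝ᵥ ((K.map Complex.ofReal) *ᵥ v) with hkdef
  have hppos : 0 < p := hPc.dotProduct_mulVec_pos hv0
  have hgpos : 0 < g := hGc.dotProduct_mulVec_pos hv0
  rw [Complex.lt_def] at hppos hgpos
  simp only [Complex.zero_re, Complex.zero_im] at hppos hgpos
  -- the skew part has purely imaginary quadratic form
  have hKskew : Kᵀ = -K := by
    rw [hKdef, transpose_smul, transpose_sub, transpose_transpose]
    rw [← smul_neg, neg_sub]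
  have hKcskew : (K.map Complex.ofReal)ᴴ = -(K.map Complex.ofReal) := by
    rw [phw_conjT_map, hKskew]
    ext i j
    simp
  have hkstar : star k = -k := by
    have h1 : star k = star v ⬝ᵥ ((K.map Complex.ofReal)ᴴ *ᵥ v) := by
      rw [hkdef, dotProduct_mulVec,
        show star v ᵥ* (K.map Complex.ofReal) = star ((K.map Complex.ofReal)ᴴ *ᵥ v) by
          rw [star_mulVec, conjTranspose_conjTranspose],
        ← star_dotProduct]
    rw [h1, hKcskew, neg_mulVec, dotProduct_neg, ← hkdef]
  have hkre : k.re = 0 := by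
    have := congrArg Complex.re hkstar
    simp only [Complex.neg_re] at this
    rw [show (star k).re = k.re from rfl] at this
    linarith
  -- decompose M
  have hMc : (M.map Complex.ofReal) = -(G.map Complex.ofReal) + (K.map Complex.ofReal) := by
    rw [hMeq]
    ext i j
    simp
  have hquad : -g + k = μ * p := by
    rw [hpdef, ← keyd, hMc, add_mulVec, neg_mulVec, dotProduct_add, dotProduct_neg, hgdef, hkdef]
  -- take real parts
  have hre := congrArg Complex.re hquad
  simp only [Complex.add_re, Complex.neg_re, Complex.mul_re, hkre] at hre
  rw [← hppos.2] at hre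
  nlinarith [hppos.1, hgpos.1, hre]
end

section
/- Suppose ψ : ℝᵈ → ℝᴰ is a continuous immersion with ψ(0) = 0 which is proper on the relevant domain, A ∈ ℝ^{D×D} is Hurwitz, and the flow of ẋ = f(x) satisfies ψ(x(t)) = exp(tA) ψ(x(0)) for all t ≥ 0 and all initial conditions; additionally assume ψ is injective. Then x(t) → some point in ψ⁻¹({0}) as t → ∞ for every initial condition; in particular if ψ⁻¹({0}) = {0}, then x(t) → 0. -/
open Matrix Filter Topology

open NormedSpace


lemma scalar_tendsto (μ : ℂ) (hμ : μ.re < 0) (k : ℕ) :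
    Tendsto (fun t : ℝ => Complex.exp ((t : ℂ) * μ) * ((t : ℂ) ^ k * ((Nat.factorial k : ℂ))⁻¹))
      atTop (𝓝 0) := by
  set b : ℝ := -μ.re with hb
  have hb0 : 0 < b := by simp [hb]; linarith
  have h1 : Tendsto (fun t : ℝ => b * t) atTop atTop :=
    Tendsto.const_mul_atTop hb0 tendsto_id
  have h2 : Tendsto (fun t : ℝ => (b * t) ^ k * Real.exp (-(b * t))) atTop (𝓝 0) :=
    (Real.tendsto_pow_mul_exp_neg_atTop_nhds_zero k).comp h1
  have h3 : Tendsto (fun t : ℝ => ((Nat.factorial k : ℝ))⁻¹ * b⁻¹ ^ k * ((b * t) ^ k * Real.exp (-(b * t))))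
      atTop (𝓝 0) := by
    simpa using h2.const_mul (((Nat.factorial k : ℝ))⁻¹ * b⁻¹ ^ k)
  apply squeeze_zero_norm' _ h3
  filter_upwards [eventually_ge_atTop (0 : ℝ)] with t ht
  have habs : ‖Complex.exp ((t : ℂ) * μ) * ((t : ℂ) ^ k * ((Nat.factorial k : ℂ))⁻¹)‖
      = Real.exp (t * μ.re) * (t ^ k * ((Nat.factorial k : ℝ))⁻¹) := by
    rw [norm_mul, norm_mul, Complex.norm_exp]
    simp [Complex.norm_natCast, abs_of_nonneg ht, Complex.mul_re]
  rw [habs]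
  have : Real.exp (t * μ.re) * (t ^ k * ((Nat.factorial k : ℝ))⁻¹)
      = ((Nat.factorial k : ℝ))⁻¹ * b⁻¹ ^ k * ((b * t) ^ k * Real.exp (-(b * t))) := by
    have hbne : b ≠ 0 := ne_of_gt hb0
    have : t * μ.re = -(b * t) := by rw [hb]; ring
    rw [this, mul_pow]
    field_simp
    simp [hbne]
  rw [this]

lemma genEig_tendsto {D : ℕ} (M : Matrix (Fin D) (Fin D) ℂ) (μ : ℂ) (hμ : μ.re < 0)
    (v : Fin D → ℂ) (K : ℕ) (hv : ((M - μ • 1) ^ K).mulVec v = 0) :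
    Tendsto (fun t : ℝ => (exp ((t : ℂ) • M)).mulVec v) atTop (𝓝 0) := by
  letI : SeminormedRing (Matrix (Fin D) (Fin D) ℂ) := Matrix.linftyOpSemiNormedRing
  letI : NormedRing (Matrix (Fin D) (Fin D) ℂ) := Matrix.linftyOpNormedRing
  letI : NormedAlgebra ℂ (Matrix (Fin D) (Fin D) ℂ) := Matrix.linftyOpNormedAlgebra
  set N : Matrix (Fin D) (Fin D) ℂ := M - μ • 1 with hN
  -- split the exponential
  have hsplit : ∀ t : ℝ, exp ((t : ℂ) • M)
      = Complex.exp ((t : ℂ) * μ) • exp ((t : ℂ) • N) := by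
    intro t
    have hdecomp : (t : ℂ) • M = ((t : ℂ) * μ) • (1 : Matrix (Fin D) (Fin D) ℂ) + (t : ℂ) • N := by
      rw [hN, smul_sub, smul_smul]
      abel
    have hc : Commute (((t : ℂ) * μ) • (1 : Matrix (Fin D) (Fin D) ℂ)) ((t : ℂ) • N) :=
      ((Commute.one_left _).smul_left _).smul_right _
    letI : NormedAlgebra ℚ (Matrix (Fin D) (Fin D) ℂ) := Matrix.linftyOpNormedAlgebra
    rw [hdecomp]
    erw [NormedSpace.exp_add_of_commute hc]
    have h1 : exp (((t : ℂ) * μ) • (1 : Matrix (Fin D) (Fin D) ℂ))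
        = Complex.exp ((t : ℂ) * μ) • (1 : Matrix (Fin D) (Fin D) ℂ) := by
      rw [← Algebra.algebraMap_eq_smul_one]
      erw [← algebraMap_exp_comm]
      rw [Complex.exp_eq_exp_ℂ, Algebra.algebraMap_eq_smul_one]
    erw [h1]
    rw [smul_mul_assoc, one_mul]
    rfl
  -- compute exp of the nilpotent part applied to v
  have hNpow : ∀ k, K ≤ k → (N ^ k).mulVec v = 0 := by
    intro k hk
    have : N ^ k = N ^ (k - K) * N ^ K := by rw [← pow_add]; congr 1; omega
    rw [this, ← Matrix.mulVec_mulVec, hv, Matrix.mulVec_zero]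
  have hexpN : ∀ t : ℝ, (exp ((t : ℂ) • N)).mulVec v
      = ∑ k ∈ Finset.range K, ((t : ℂ) ^ k * ((Nat.factorial k : ℂ))⁻¹) • (N ^ k).mulVec v := by
    intro t
    let L : Matrix (Fin D) (Fin D) ℂ →ₗ[ℂ] (Fin D → ℂ) :=
      { toFun := fun X => X.mulVec v
        map_add' := fun X Y => Matrix.add_mulVec X Y v
        map_smul' := fun c X => Matrix.smul_mulVec c X v }
    have hL : Continuous L := L.continuous_of_finiteDimensional
    have hsum : Summable fun n : ℕ => ((Nat.factorial n : ℂ))⁻¹ • ((t : ℂ) • N) ^ n :=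
      expSeries_summable' (𝕂 := ℂ) ((t : ℂ) • N)
    have hmap := (hsum.hasSum.map L hL).tsum_eq
    have hexp : (exp ((t : ℂ) • N)).mulVec v
        = ∑' n : ℕ, L (((Nat.factorial n : ℂ))⁻¹ • ((t : ℂ) • N) ^ n) := by
      rw [exp_eq_tsum ℂ]
      exact hmap.symm
    rw [hexp]
    have hterm : ∀ n : ℕ, L (((Nat.factorial n : ℂ))⁻¹ • ((t : ℂ) • N) ^ n)
        = ((t : ℂ) ^ n * ((Nat.factorial n : ℂ))⁻¹) • (N ^ n).mulVec v := by
      intro n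
      rw [smul_pow, _root_.map_smul, _root_.map_smul]
      show ((Nat.factorial n : ℂ))⁻¹ • (t : ℂ) ^ n • (N ^ n).mulVec v = _
      rw [smul_smul, mul_comm]
    calc (∑' n : ℕ, L (((Nat.factorial n : ℂ))⁻¹ • ((t : ℂ) • N) ^ n))
        = ∑' n : ℕ, ((t : ℂ) ^ n * ((Nat.factorial n : ℂ))⁻¹) • (N ^ n).mulVec v := by
          exact tsum_congr hterm
      _ = ∑ k ∈ Finset.range K, ((t : ℂ) ^ k * ((Nat.factorial k : ℂ))⁻¹) • (N ^ k).mulVec v := by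
          apply tsum_eq_sum
          intro k hk
          rw [hNpow k (by simpa using hk)]
          simp
  have heq : ∀ t : ℝ, (exp ((t : ℂ) • M)).mulVec v
      = ∑ k ∈ Finset.range K,
          (Complex.exp ((t : ℂ) * μ) * ((t : ℂ) ^ k * ((Nat.factorial k : ℂ))⁻¹))
            • (N ^ k).mulVec v := by
    intro t
    rw [hsplit t, Matrix.smul_mulVec, hexpN t, Finset.smul_sum]
    refine Finset.sum_congr rfl fun k _ => ?_
    rw [smul_smul]
  simp only [heq]
  have : Tendsto (fun t : ℝ => ∑ k ∈ Finset.range K,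
      (Complex.exp ((t : ℂ) * μ) * ((t : ℂ) ^ k * ((Nat.factorial k : ℂ))⁻¹))
        • (N ^ k).mulVec v) atTop
      (𝓝 (∑ k ∈ Finset.range K, (0 : ℂ) • (N ^ k).mulVec v)) := by
    refine tendsto_finset_sum _ fun k _ => ?_
    exact (scalar_tendsto μ hμ k).smul_const _
  simpa using this

lemma complex_key {D : ℕ} (M : Matrix (Fin D) (Fin D) ℂ)
    (hM : ∀ μ ∈ spectrum ℂ M, μ.re < 0) (v : Fin D → ℂ) :
    Tendsto (fun t : ℝ => (exp ((t : ℂ) • M)).mulVec v) atTop (𝓝 0) := by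
  let S : Submodule ℂ (Fin D → ℂ) :=
    { carrier := {w | Tendsto (fun t : ℝ => (exp ((t : ℂ) • M)).mulVec w) atTop (𝓝 0)}
      add_mem' := by
        intro a b ha hb
        simpa [Matrix.mulVec_add] using ha.add hb
      zero_mem' := by
        simpa [Matrix.mulVec_zero] using (tendsto_const_nhds :
          Tendsto (fun _ : ℝ => (0 : Fin D → ℂ)) atTop (𝓝 0))
      smul_mem' := by
        intro c a ha
        have := ha.const_smul c
        simpa [Matrix.mulVec_smul] using this }
  set f : Module.End ℂ (Fin D → ℂ) := Matrix.toLinAlgEquiv' M with hf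
  have htop : ⨆ μ, f.maxGenEigenspace μ = ⊤ := Module.End.iSup_maxGenEigenspace_eq_top f
  have hle : ∀ μ, f.maxGenEigenspace μ ≤ S := by
    intro μ w hw
    rcases eq_or_ne w 0 with rfl | hw0
    · exact S.zero_mem
    obtain ⟨k, hk⟩ := (f.mem_maxGenEigenspace μ w).mp hw
    have hgen : f.HasGenEigenvalue μ k := by
      intro hbot
      have hwmem : w ∈ f.genEigenspace μ (k : ℕ∞) :=
        (Module.End.mem_genEigenspace_nat).mpr (by simpa using hk)
      rw [hbot] at hwmem
      exact hw0 (by simpa using hwmem)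
    have heig : f.HasEigenvalue μ := Module.End.hasEigenvalue_of_hasGenEigenvalue hgen
    have hspec : μ ∈ spectrum ℂ M := by
      have := heig.mem_spectrum
      rwa [hf, AlgEquiv.spectrum_eq] at this
    have hμ : μ.re < 0 := hM μ hspec
    have hmul : ((M - μ • 1) ^ k).mulVec w = 0 := by
      have hmap : Matrix.toLinAlgEquiv' ((M - μ • 1) ^ k) = (f - μ • 1) ^ k := by
        rw [map_pow, map_sub, _root_.map_smul, _root_.map_one, hf]
      have : ((M - μ • 1) ^ k).mulVec w = (Matrix.toLinAlgEquiv' ((M - μ • 1) ^ k)) w := rfl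
      rw [this, hmap, hk]
    exact genEig_tendsto M μ hμ w k hmul
  have hS : ∀ w, w ∈ S := by
    intro w
    have : (⊤ : Submodule ℂ (Fin D → ℂ)) ≤ S := by
      rw [← htop]
      exact iSup_le hle
    exact this Submodule.mem_top
  exact hS v

lemma real_key {D : ℕ} (A : Matrix (Fin D) (Fin D) ℝ)
    (hA : ∀ μ ∈ spectrum ℂ (A.map Complex.ofReal), μ.re < 0) (u : Fin D → ℝ) :
    Tendsto (fun t : ℝ => (exp (t • A)).mulVec u) atTop (𝓝 0) := by
  letI : SeminormedRing (Matrix (Fin D) (Fin D) ℝ) := Matrix.linftyOpSemiNormedRing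
  letI : NormedRing (Matrix (Fin D) (Fin D) ℝ) := Matrix.linftyOpNormedRing
  letI : NormedAlgebra ℝ (Matrix (Fin D) (Fin D) ℝ) := Matrix.linftyOpNormedAlgebra
  letI : SeminormedRing (Matrix (Fin D) (Fin D) ℂ) := Matrix.linftyOpSemiNormedRing
  letI : NormedRing (Matrix (Fin D) (Fin D) ℂ) := Matrix.linftyOpNormedRing
  letI : NormedAlgebra ℝ (Matrix (Fin D) (Fin D) ℂ) := Matrix.linftyOpNormedAlgebra
  set M : Matrix (Fin D) (Fin D) ℂ := A.map Complex.ofReal with hM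
  have key := complex_key M hA (fun i => (u i : ℂ))
  have hmap : ∀ t : ℝ, exp ((t : ℂ) • M) = (exp (t • A)).map Complex.ofReal := by
    intro t
    have h1 : ((t • A).map Complex.ofReal) = (t : ℂ) • M := by
      ext i j
      simp [hM, Matrix.map_apply]
    have hcontm : Continuous fun X : Matrix (Fin D) (Fin D) ℝ =>
        (Complex.ofRealHom.mapMatrix : Matrix (Fin D) (Fin D) ℝ →+* Matrix (Fin D) (Fin D) ℂ) X := by
      show Continuous fun X : Matrix (Fin D) (Fin D) ℝ => X.map Complex.ofReal
      exact continuous_id.matrix_map Complex.continuous_ofReal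
    letI : NormedAlgebra ℚ (Matrix (Fin D) (Fin D) ℝ) := Matrix.linftyOpNormedAlgebra
    have h2 := map_exp (Complex.ofRealHom.mapMatrix :
      Matrix (Fin D) (Fin D) ℝ →+* Matrix (Fin D) (Fin D) ℂ) hcontm (t • A)
    have h3 : (Complex.ofRealHom.mapMatrix (exp (t • A)) : Matrix (Fin D) (Fin D) ℂ)
        = (exp (t • A)).map Complex.ofReal := rfl
    have h4 : (Complex.ofRealHom.mapMatrix (t • A) : Matrix (Fin D) (Fin D) ℂ)
        = (t : ℂ) • M := by
      show ((t • A).map Complex.ofReal) = (t : ℂ) • M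
      exact h1
    rw [← h3, ← h4]
    exact h2.symm
  rw [tendsto_pi_nhds] at key ⊢
  intro j
  have hcoord : ∀ t : ℝ, ((exp ((t : ℂ) • M)).mulVec fun i => (u i : ℂ)) j
      = (((exp (t • A)).mulVec u) j : ℂ) := by
    intro t
    rw [hmap]
    simp only [Matrix.mulVec, dotProduct, Matrix.map_apply]
    push_cast
    rfl
  have := (Complex.continuous_re.tendsto _).comp (key j)
  simp only [Function.comp_def, hcoord] at this
  simpa using this

/-- if ψ is a continuous, injective, proper immersion with ψ(0) = 0,
A is Hurwitz, and the flow satisfies ψ(x(t)) = exp(tA) ψ(x(0)) for t ≥ 0, then every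
trajectory converges to a point of ψ⁻¹({0}); in particular if ψ⁻¹({0}) = {0} then
every trajectory converges to 0. -/
theorem stable_linear_predictor_convergence {d D : ℕ}
    (ψ : (Fin d → ℝ) → (Fin D → ℝ))
    (hcont : Continuous ψ) (hdiff : Differentiable ℝ ψ)
    (himm : ∀ x, Function.Injective (fderiv ℝ ψ x))
    (hinj : Function.Injective ψ) (h0 : ψ 0 = 0)
    (hproper : ∀ K : Set (Fin D → ℝ), IsCompact K → IsCompact (ψ ⁻¹' K))
    (A : Matrix (Fin D) (Fin D) ℝ)
    (hA : ∀ μ ∈ spectrum ℂ (A.map (Complex.ofReal)), μ.re < 0)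
    (x : (Fin d → ℝ) → ℝ → (Fin d → ℝ))
    (hflow : ∀ x₀ : Fin d → ℝ, ∀ t : ℝ, 0 ≤ t →
      ψ (x x₀ t) = (NormedSpace.exp (t • A)).mulVec (ψ x₀)) :
    (∀ x₀, ∃ q, ψ q = 0 ∧ Tendsto (x x₀) atTop (𝓝 q)) ∧
    (ψ ⁻¹' {0} = {0} → ∀ x₀, Tendsto (x x₀) atTop (𝓝 (0 : Fin d → ℝ))) := by
  have hpm : IsProperMap ψ := isProperMap_iff_isCompact_preimage.mpr
    ⟨hcont, fun K hK => hproper K hK⟩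
  have hemb : IsClosedEmbedding ψ :=
    IsClosedEmbedding.of_continuous_injective_isClosedMap hcont hinj hpm.isClosedMap
  have hx : ∀ x₀, Tendsto (x x₀) atTop (𝓝 (0 : Fin d → ℝ)) := by
    intro x₀
    have hψ : Tendsto (fun t => ψ (x x₀ t)) atTop (𝓝 0) := by
      apply (real_key A hA (ψ x₀)).congr'
      filter_upwards [eventually_ge_atTop (0 : ℝ)] with t ht
      exact (hflow x₀ t ht).symm
    rw [hemb.isEmbedding.tendsto_nhds_iff]
    simpa [Function.comp_def, h0] using hψ
  exact ⟨fun x₀ => ⟨0, h0, hx x₀⟩, fun _ x₀ => hx x₀⟩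
end
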